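/- Let Λ be a compact invariant set of a C¹ flow on a compact manifold that is both positively and negatively sectional-hyperbolic. Then Λ is almost hyperbolic: there exist continuous invariant contracting and expanding subbundles E^s and E^u of T_ΛM with T_xM = E^s_x ⊕ ⟨X(x)⟩ ⊕ E^u_x at every regular point x of Λ, and every singularity in Λ is hyperbolic. -/

import Mathlib

open Real Set Filter Metric RealInnerProductSpace

noncomputable section

/-- The 2-norm (areal metric): the area of the parallelogram spanned by `u` and `v`. -/
def area2 {V : Type*} [NormedAddCommGroup V] [InnerProductSpace ℝ V] (u v : V) : ℝ :=
  Real.sqrt (⟪u, u⟫ * ⟪v, v⟫ - ⟪u, v⟫ ^ 2)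

/-- A `C¹` flow on the space `V`, together with its generating vector field. -/
structure CFlow (V : Type*) [NormedAddCommGroup V] [InnerProductSpace ℝ V] where
  /-- the generating vector field -/
  X : V → V
  /-- the flow map -/
  φ : ℝ → V → V
  smooth : ContDiff ℝ 1 (Function.uncurry φ)
  map_zero : ∀ x, φ 0 x = x
  map_add : ∀ s t x, φ (s + t) x = φ s (φ t x)
  deriv_eq : ∀ x t, HasDerivAt (fun s => φ s x) (X (φ t x)) t

namespace CFlow

variable {V : Type*} [NormedAddCommGroup V] [InnerProductSpace ℝ V] (f : CFlow V)

/-- Derivative cocycle `DX_t(x)`. -/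
def D (t : ℝ) (x : V) : V →L[ℝ] V := fderiv ℝ (f.φ t) x

/-- The time-reversed flow `-X`. -/
def reverse : CFlow V where
  X := fun x => -f.X x
  φ := fun t x => f.φ (-t) x
  smooth := f.smooth.comp (ContDiff.prodMk (contDiff_fst.neg) contDiff_snd)
  map_zero := fun x => f.map_zero x |>.symm ▸ by simp [f.map_zero]
  map_add := fun s t x => by
    show f.φ (-(s + t)) x = _
    rw [neg_add]; exact f.map_add (-s) (-t) x
  deriv_eq := fun x t => by
    have h := (f.deriv_eq x (-t)).scomp t (hasDerivAt_neg t)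
    simpa [Function.comp_def] using h

/-- Invariance of a set under the flow. -/
def Invariant (Λ : Set V) : Prop := ∀ t, f.φ t '' Λ = Λ

/-- The orbit of a point. -/
def orbit (x : V) : Set V := Set.range fun t => f.φ t x

/-- The ω-limit set of a point. -/
def omegaLim (x : V) : Set V := ⋂ T : ℝ, closure {y | ∃ t, T ≤ t ∧ f.φ t x = y}

/-- The α-limit set of a point. -/
def alphaLim (x : V) : Set V := ⋂ T : ℝ, closure {y | ∃ t, t ≤ T ∧ f.φ t x = y}

/-- A transitive set: the ω-limit set of one of its points. -/
def Transitive (Λ : Set V) : Prop := ∃ x ∈ Λ, f.omegaLim x = Λ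

/-- A singularity (zero) of the vector field. -/
def IsSing (σ : V) : Prop := f.X σ = 0

/-- Invariance of a family of subspaces under the derivative cocycle. -/
def SubInvariant (Λ : Set V) (E : V → Submodule ℝ V) : Prop :=
  ∀ x ∈ Λ, ∀ t : ℝ, (E x).map (f.D t x).toLinearMap = E (f.φ t x)

/-- Continuity of a subbundle over `Λ`, encoded by a continuous family of
projections onto its fibers. -/
def ContinuousSub (Λ : Set V) (E : V → Submodule ℝ V) : Prop :=
  ∃ P : V → V →L[ℝ] V, ContinuousOn P Λ ∧
    ∀ x ∈ Λ, LinearMap.range (P x).toLinearMap = E x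

/-- Uniform contraction of a subbundle. -/
def Contracting (Λ : Set V) (E : V → Submodule ℝ V) (K lam : ℝ) : Prop :=
  ∀ x ∈ Λ, ∀ v ∈ E x, ∀ t : ℝ, 0 ≤ t →
    ‖f.D t x v‖ ≤ K * Real.exp (-lam * t) * ‖v‖

/-- Uniform expansion of a subbundle. -/
def Expanding (Λ : Set V) (E : V → Submodule ℝ V) (K lam : ℝ) : Prop :=
  ∀ x ∈ Λ, ∀ v ∈ E x, ∀ t : ℝ, 0 ≤ t →
    ‖f.D t x v‖ ≥ K⁻¹ * Real.exp (lam * t) * ‖v‖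

/-- Domination of the splitting `E ⊕ F`. -/
def Dominated (Λ : Set V) (E F : V → Submodule ℝ V) (K lam : ℝ) : Prop :=
  ∀ x ∈ Λ, ∀ t : ℝ, 0 ≤ t → ∀ e ∈ E x, ∀ u ∈ F x,
    ‖f.D t x e‖ * ‖u‖ ≤ K * Real.exp (-lam * t) * ‖f.D t x u‖ * ‖e‖

/-- Sectional expansion: uniform exponential growth of areas of parallelograms
of pairs of vectors in the central subbundle. -/
def SectionallyExpanding (Λ : Set V) (F : V → Submodule ℝ V) (K lam : ℝ) : Prop :=
  ∀ x ∈ Λ, ∀ u ∈ F x, ∀ v ∈ F x, ∀ t : ℝ, 0 ≤ t →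
    area2 (f.D t x u) (f.D t x v) ≥ K⁻¹ * Real.exp (lam * t) * area2 u v

/-- A hyperbolic singularity: hyperbolic splitting `T_σM = Fs ⊕ Fu`
invariant under the derivative cocycle, with contraction and expansion. -/
def IsHyperbolicSing (σ : V) : Prop :=
  f.IsSing σ ∧ ∃ (Fs Fu : Submodule ℝ V) (K lam : ℝ), 0 < K ∧ 0 < lam ∧
    IsCompl Fs Fu ∧
    (∀ t, Fs.map (f.D t σ).toLinearMap = Fs) ∧
    (∀ t, Fu.map (f.D t σ).toLinearMap = Fu) ∧
    (∀ v ∈ Fs, ∀ t : ℝ, 0 ≤ t → ‖f.D t σ v‖ ≤ K * Real.exp (-lam * t) * ‖v‖) ∧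
    (∀ v ∈ Fu, ∀ t : ℝ, 0 ≤ t → ‖f.D t σ v‖ ≥ K⁻¹ * Real.exp (lam * t) * ‖v‖)

/-- Internal direct sum of three subspaces. -/
def IsTripleSplitting (A B C : Submodule ℝ V) : Prop :=
  A ⊓ (B ⊔ C) = ⊥ ∧ B ⊓ C = ⊥ ∧ A ⊔ B ⊔ C = ⊤

/-- A hyperbolic set: compact invariant set with a continuous invariant
splitting `Es ⊕ ⟨X⟩ ⊕ Eu`, `Es` contracting and `Eu` expanding. -/
def IsHyperbolicSet (Λ : Set V) : Prop :=
  IsCompact Λ ∧ f.Invariant Λ ∧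
  ∃ (Es Eu : V → Submodule ℝ V) (K lam : ℝ), 0 < K ∧ 0 < lam ∧
    ContinuousSub Λ Es ∧ ContinuousSub Λ Eu ∧
    f.SubInvariant Λ Es ∧ f.SubInvariant Λ Eu ∧
    f.Contracting Λ Es K lam ∧ f.Expanding Λ Eu K lam ∧
    ∀ x ∈ Λ, IsTripleSplitting (Es x) (Submodule.span ℝ {f.X x}) (Eu x)

/-- A sectional-hyperbolic splitting over `Λ`: a continuous invariant
dominated splitting `E ⊕ F` with `E` contracting and `F` sectionally expanding. -/
def SectionalHyperbolicSplitting (Λ : Set V) (E F : V → Submodule ℝ V) : Prop :=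
  ∃ K lam : ℝ, 0 < K ∧ 0 < lam ∧
    ContinuousSub Λ E ∧ ContinuousSub Λ F ∧
    f.SubInvariant Λ E ∧ f.SubInvariant Λ F ∧
    (∀ x ∈ Λ, IsCompl (E x) (F x)) ∧
    f.Dominated Λ E F K lam ∧
    f.Contracting Λ E K lam ∧
    f.SectionallyExpanding Λ F K lam

/-- A (positively) sectional-hyperbolic set for the flow `f`. -/
def PositivelySectionalHyperbolic (Λ : Set V) : Prop :=
  IsCompact Λ ∧ f.Invariant Λ ∧
  (∀ σ ∈ Λ, f.IsSing σ → f.IsHyperbolicSing σ) ∧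
  ∃ E F : V → Submodule ℝ V, f.SectionalHyperbolicSplitting Λ E F

/-- A negatively sectional-hyperbolic set: sectional-hyperbolic for `-X`. -/
def NegativelySectionalHyperbolic (Λ : Set V) : Prop :=
  f.reverse.PositivelySectionalHyperbolic Λ

/-- An almost hyperbolic set (Definition 3.1). -/
def AlmostHyperbolic (Λ : Set V) : Prop :=
  IsCompact Λ ∧ f.Invariant Λ ∧
  (∀ σ ∈ Λ, f.IsSing σ → f.IsHyperbolicSing σ) ∧
  ∃ (Es Eu : V → Submodule ℝ V) (K lam : ℝ), 0 < K ∧ 0 < lam ∧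
    ContinuousSub Λ Es ∧ ContinuousSub Λ Eu ∧
    f.SubInvariant Λ Es ∧ f.SubInvariant Λ Eu ∧
    f.Contracting Λ Es K lam ∧ f.Expanding Λ Eu K lam ∧
    ∀ x ∈ Λ, f.X x ≠ 0 →
      IsTripleSplitting (Es x) (Submodule.span ℝ {f.X x}) (Eu x)

/-- The stable manifold of a singularity. -/
def stableSet (σ : V) : Set V := {x | Tendsto (fun t => f.φ t x) atTop (nhds σ)}

/-- The unstable manifold of a singularity. -/
def unstableSet (σ : V) : Set V := {x | Tendsto (fun t => f.φ t x) atBot (nhds σ)}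


variable [FiniteDimensional ℝ V]


/-! ### Auxiliary lemmas for Lemma 3.4 -/

lemma reverse_phi (t : ℝ) (x : V) : f.reverse.φ t x = f.φ (-t) x := rfl

lemma reverse_D (t : ℝ) (x : V) : f.reverse.D t x = f.D (-t) x := rfl

lemma reverse_X (x : V) : f.reverse.X x = -f.X x := rfl

lemma diff_phi (t : ℝ) : Differentiable ℝ (f.φ t) :=
  (f.smooth.comp (contDiff_const.prodMk contDiff_id)).differentiable one_ne_zero

lemma D_apply_D (s t : ℝ) (x v : V) :
    f.D t (f.φ s x) (f.D s x v) = f.D (t + s) x v := by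
  have h1 : f.φ (t + s) = f.φ t ∘ f.φ s := funext fun y => f.map_add t s y
  have h2 : fderiv ℝ (f.φ t ∘ f.φ s) x
      = (fderiv ℝ (f.φ t) (f.φ s x)).comp (fderiv ℝ (f.φ s) x) :=
    fderiv_comp x (f.diff_phi t _) (f.diff_phi s _)
  simp only [CFlow.D]
  rw [h1, h2]
  rfl

lemma D_zero (x : V) : f.D 0 x = ContinuousLinearMap.id ℝ V := by
  have h : f.φ 0 = id := funext f.map_zero
  simp only [CFlow.D, h, fderiv_id]

lemma phi_neg_phi (t : ℝ) (x : V) : f.φ (-t) (f.φ t x) = x := by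
  rw [← f.map_add]
  simp [f.map_zero]

lemma D_neg_D (t : ℝ) (x v : V) : f.D (-t) (f.φ t x) (f.D t x v) = v := by
  have h := f.D_apply_D t (-t) x v
  rw [show -t + t = 0 by ring, f.D_zero] at h
  simpa using h

lemma X_phi (t : ℝ) (x : V) : f.D t x (f.X x) = f.X (f.φ t x) := by
  have hg : HasDerivAt (fun s => f.φ s x) (f.X (f.φ t x)) ((fun s : ℝ => t + s) 0) := by
    simpa using f.deriv_eq x t
  have hh : HasDerivAt (fun s : ℝ => t + s) 1 0 := (hasDerivAt_id (0:ℝ)).const_add t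
  have h1 : HasDerivAt (fun s => f.φ (t + s) x) (f.X (f.φ t x)) 0 := by
    simpa [Function.comp_def] using hg.scomp (0:ℝ) hh
  have hx0 : HasDerivAt (fun s => f.φ s x) (f.X x) 0 := by
    simpa [f.map_zero] using f.deriv_eq x 0
  have hft : HasFDerivAt (f.φ t) (f.D t x) ((fun s => f.φ s x) 0) := by
    show HasFDerivAt (f.φ t) (f.D t x) (f.φ 0 x)
    rw [f.map_zero]
    exact (f.diff_phi t x).hasFDerivAt
  have h2 : HasDerivAt (fun s => f.φ t (f.φ s x)) (f.D t x (f.X x)) 0 :=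
    hft.comp_hasDerivAt 0 hx0
  have hfe : (fun s => f.φ (t + s) x) = fun s => f.φ t (f.φ s x) :=
    funext fun s => f.map_add t s x
  rw [hfe] at h1
  exact (h1.unique h2).symm

lemma continuous_X : Continuous f.X := by
  have hdiff : Differentiable ℝ (Function.uncurry f.φ) := f.smooth.differentiable one_ne_zero
  have hX : f.X = fun x => fderiv ℝ (Function.uncurry f.φ) (0, x) (1, 0) := by
    funext x
    have h1 : HasDerivAt (fun s => f.φ s x) (f.X x) 0 := by
      simpa [f.map_zero] using f.deriv_eq x 0
    have hs : HasDerivAt (fun s : ℝ => ((s, x) : ℝ × V)) ((1:ℝ), (0:V)) 0 :=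
      (hasDerivAt_id (0:ℝ)).prodMk (hasDerivAt_const (0:ℝ) x)
    have h2 : HasDerivAt (fun s => f.φ s x)
        (fderiv ℝ (Function.uncurry f.φ) (0, x) (1, 0)) 0 :=
      by have := (hdiff (0, x)).hasFDerivAt.comp_hasDerivAt 0 hs; exact this
    exact h1.unique h2
  rw [hX]
  exact ((f.smooth.continuous_fderiv one_ne_zero).comp
    (continuous_const.prodMk continuous_id)).clm_apply continuous_const

lemma mem_of_inv {Λ : Set V} (hinv : f.Invariant Λ) {x : V} (hx : x ∈ Λ) (t : ℝ) :
    f.φ t x ∈ Λ := (hinv t) ▸ Set.mem_image_of_mem _ hx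

/-- Key lemma: a vector whose backward orbit under the cocycle stays bounded has
vanishing stable component. -/
lemma comp_eq_zero {Λ : Set V} {E F : V → Submodule ℝ V} {K lam : ℝ}
    (hK : 0 < K) (hlam : 0 < lam)
    (hinv : f.Invariant Λ)
    (hEi : f.SubInvariant Λ E) (hFi : f.SubInvariant Λ F)
    (hcontr : f.Contracting Λ E K lam)
    (hdom : f.Dominated Λ E F K lam)
    {x : V} (hx : x ∈ Λ) {e u : V} (he : e ∈ E x) (hu : u ∈ F x)
    {M : ℝ} (hM : ∀ t : ℝ, 0 ≤ t → ‖f.D (-t) x (e + u)‖ ≤ M) : e = 0 := by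
  by_contra he0
  have hae : (0:ℝ) < ‖e‖ := norm_pos_iff.mpr he0
  have hMnn : 0 ≤ M := le_trans (norm_nonneg (e + u))
    (by simpa [f.D_zero] using hM 0 le_rfl)
  set C : ℝ := max (2 * K * ‖u‖ / ‖e‖) ((2 * M + 1) * K / ‖e‖) with hCdef
  have htend : Tendsto (fun t : ℝ => Real.exp (lam * t)) atTop atTop :=
    Real.tendsto_exp_atTop.comp (tendsto_id.const_mul_atTop hlam)
  obtain ⟨t, htC, ht0⟩ :=
    ((htend.eventually_gt_atTop C).and (eventually_ge_atTop (0:ℝ))).exists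
  have hy : f.φ (-t) x ∈ Λ := f.mem_of_inv hinv hx (-t)
  set y := f.φ (-t) x with hydef
  set et := f.D (-t) x e with hetdef
  set ut := f.D (-t) x u with hutdef
  have het : et ∈ E y := by
    rw [hydef, ← hEi x hx (-t)]
    exact Submodule.mem_map_of_mem he
  have hut : ut ∈ F y := by
    rw [hydef, ← hFi x hx (-t)]
    exact Submodule.mem_map_of_mem hu
  have hbe : f.D t y et = e := by
    have h := f.D_apply_D (-t) t x e
    rw [show t + -t = 0 by ring, f.D_zero] at h
    simpa using h
  have hbu : f.D t y ut = u := by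
    have h := f.D_apply_D (-t) t x u
    rw [show t + -t = 0 by ring, f.D_zero] at h
    simpa using h
  have hcon := hcontr y hy et het t ht0
  rw [hbe] at hcon
  have hdm := hdom y hy t ht0 et het ut hut
  rw [hbe, hbu] at hdm
  have hw : ‖et + ut‖ ≤ M := by
    have h := hM t ht0
    rwa [_root_.map_add] at h
  have hut_ge : ‖et‖ - M ≤ ‖ut‖ := by
    have h1 := norm_add_le (et + ut) (-ut)
    simp only [add_neg_cancel_right, norm_neg] at h1
    linarith
  set ε := Real.exp (lam * t) with hεdef
  have hε : 0 < ε := Real.exp_pos _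
  have hexp : Real.exp (-lam * t) = ε⁻¹ := by
    rw [hεdef, ← Real.exp_neg]
    ring_nf
  rw [hexp] at hcon hdm
  have hcon' : ‖e‖ * ε ≤ K * ‖et‖ := by
    have := mul_le_mul_of_nonneg_right hcon hε.le
    calc ‖e‖ * ε ≤ K * ε⁻¹ * ‖et‖ * ε := this
      _ = K * ‖et‖ := by field_simp
  have hdm' : ‖e‖ * ‖ut‖ * ε ≤ K * ‖u‖ * ‖et‖ := by
    have := mul_le_mul_of_nonneg_right hdm hε.le
    calc ‖e‖ * ‖ut‖ * ε ≤ K * ε⁻¹ * ‖u‖ * ‖et‖ * ε := this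
      _ = K * ‖u‖ * ‖et‖ := by field_simp
  have htC1 : 2 * K * ‖u‖ < ε * ‖e‖ := by
    have h1 : 2 * K * ‖u‖ / ‖e‖ < ε := lt_of_le_of_lt (le_max_left _ _) htC
    rw [div_lt_iff₀ hae] at h1
    linarith
  have htC2 : (2 * M + 1) * K < ε * ‖e‖ := by
    have h1 : (2 * M + 1) * K / ‖e‖ < ε := lt_of_le_of_lt (le_max_right _ _) htC
    rw [div_lt_iff₀ hae] at h1
    linarith
  have hEt0 : 0 < ‖et‖ := by nlinarith
  have hEt : 2 * M + 1 ≤ ‖et‖ := by nlinarith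
  -- a (Et - M) ε ≤ K b Et < a ε Et / 2, while Et - M ≥ Et/2 + 1/2
  have h5 : ‖e‖ * (‖et‖ - M) * ε ≤ K * ‖u‖ * ‖et‖ := by
    nlinarith [mul_le_mul_of_nonneg_right (mul_le_mul_of_nonneg_left hut_ge hae.le) hε.le, hdm']
  nlinarith [mul_lt_mul_of_pos_right htC1 hEt0,
    mul_le_mul_of_nonneg_left hEt (mul_pos hae hε).le, mul_pos hae hε, h5]

/-- The flow direction lies in the central subbundle. -/
lemma X_mem_center {Λ : Set V} {E F : V → Submodule ℝ V} {K lam : ℝ}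
    (hK : 0 < K) (hlam : 0 < lam) (hΛc : IsCompact Λ) (hinv : f.Invariant Λ)
    (hEi : f.SubInvariant Λ E) (hFi : f.SubInvariant Λ F)
    (hcompl : ∀ x ∈ Λ, IsCompl (E x) (F x))
    (hcontr : f.Contracting Λ E K lam) (hdom : f.Dominated Λ E F K lam)
    {x : V} (hx : x ∈ Λ) : f.X x ∈ F x := by
  obtain ⟨M, hM⟩ := hΛc.exists_bound_of_continuousOn f.continuous_X.continuousOn
  have hmem : f.X x ∈ E x ⊔ F x := by
    rw [(hcompl x hx).sup_eq_top]
    trivial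
  obtain ⟨e, he, u, hu, heu⟩ := Submodule.mem_sup.mp hmem
  have he0 : e = 0 := by
    refine f.comp_eq_zero hK hlam hinv hEi hFi hcontr hdom hx he hu (M := M) ?_
    intro t ht
    rw [heu, f.X_phi (-t) x]
    exact hM _ (f.mem_of_inv hinv hx (-t))
  rw [← heu, he0, zero_add]
  exact hu

lemma area2_nonneg (u v : V) : 0 ≤ area2 u v := Real.sqrt_nonneg _

lemma mem_span_of_area2_eq_zero {v w : V} (hw : w ≠ 0) (h : area2 v w = 0) :
    v ∈ Submodule.span ℝ {w} := by
  have hcs : ⟪v, w⟫ * ⟪v, w⟫ ≤ ⟪v, v⟫ * ⟪w, w⟫ := real_inner_mul_inner_self_le v w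
  have hd : ⟪v, v⟫ * ⟪w, w⟫ - ⟪v, w⟫ ^ 2 = 0 := by
    rcases lt_or_eq_of_le (show ⟪v, v⟫ * ⟪w, w⟫ - ⟪v, w⟫ ^ 2 ≥ 0 by nlinarith) with h1 | h1
    · exfalso
      have := Real.sqrt_pos.mpr h1
      rw [area2] at h
      linarith
    · exact h1.symm
  have hww : (0:ℝ) < ⟪w, w⟫ := by
    rw [real_inner_self_eq_norm_sq]
    exact pow_pos (norm_pos_iff.mpr hw) 2
  refine Submodule.mem_span_singleton.mpr ⟨⟪v, w⟫ / ⟪w, w⟫, ?_⟩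
  have hz : ⟪v - (⟪v, w⟫ / ⟪w, w⟫) • w, v - (⟪v, w⟫ / ⟪w, w⟫) • w⟫ = (0:ℝ) := by
    simp only [inner_sub_left, inner_sub_right, real_inner_smul_left,
      real_inner_smul_right, real_inner_comm w v]
    field_simp
    linear_combination hd + (⟪w, v⟫ + ⟪v, w⟫) * real_inner_comm w v
  exact (sub_eq_zero.mp (inner_self_eq_zero.mp hz)).symm

/-- Lemma 3.4 (thA): every compact invariant set which is both positively and
negatively sectional-hyperbolic is almost hyperbolic. -/
theorem stmt13 (f : CFlow V) (Λ : Set V)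
    (hpos : f.PositivelySectionalHyperbolic Λ)
    (hneg : f.NegativelySectionalHyperbolic Λ) :
    f.AlmostHyperbolic Λ := by
  obtain ⟨hΛc, hΛinv, hsing, E, F, K, lam, hK, hlam, hEc, hFc, hEi, hFi, hcompl,
    hdom, hcontr, hsec⟩ := hpos
  obtain ⟨-, hΛinv', -, Eh, Fh, Kh, lamh, hKh, hlamh, hEhc, hFhc, hEhi, hFhi,
    hcomplh, hdomh, hcontrh, hsech⟩ := hneg
  -- forward invariance of the reversed bundles
  have hEhinv : f.SubInvariant Λ Eh := by
    intro x hx t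
    have h := hEhi x hx (-t)
    rwa [f.reverse_D, f.reverse_phi, neg_neg] at h
  have hFhinv : f.SubInvariant Λ Fh := by
    intro x hx t
    have h := hFhi x hx (-t)
    rwa [f.reverse_D, f.reverse_phi, neg_neg] at h
  -- the unstable bundle is expanding for the original flow
  have hExp : f.Expanding Λ Eh Kh lamh := by
    intro x hx v hv t ht
    have hy : f.φ t x ∈ Λ := f.mem_of_inv hΛinv hx t
    have hw : f.D t x v ∈ Eh (f.φ t x) := by
      rw [← hEhinv x hx t]
      exact Submodule.mem_map_of_mem hv
    have h := hcontrh (f.φ t x) hy (f.D t x v) hw t ht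
    rw [f.reverse_D, f.D_neg_D] at h
    have hexp : Real.exp (-lamh * t) = (Real.exp (lamh * t))⁻¹ := by
      rw [← Real.exp_neg]; ring_nf
    rw [hexp] at h
    rw [ge_iff_le]
    have h2 := mul_le_mul_of_nonneg_left h
      (show (0:ℝ) ≤ Kh⁻¹ * Real.exp (lamh * t) by positivity)
    calc Kh⁻¹ * Real.exp (lamh * t) * ‖v‖
        ≤ Kh⁻¹ * Real.exp (lamh * t) * (Kh * (Real.exp (lamh * t))⁻¹ * ‖f.D t x v‖) := h2
      _ = ‖f.D t x v‖ := by field_simp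
  -- flow direction in both central bundles
  have hXF : ∀ x ∈ Λ, f.X x ∈ F x := fun x hx =>
    f.X_mem_center hK hlam hΛc hΛinv hEi hFi hcompl hcontr hdom hx
  have hXFh : ∀ x ∈ Λ, f.X x ∈ Fh x := by
    intro x hx
    have h := f.reverse.X_mem_center hKh hlamh hΛc hΛinv' hEhi hFhi hcomplh
      hcontrh hdomh hx
    rw [f.reverse_X] at h
    simpa using (Fh x).neg_mem h
  -- inclusion of the unstable bundle in the forward central bundle
  have hEhF : ∀ x ∈ Λ, Eh x ≤ F x := by
    intro x hx v hv
    obtain ⟨e, he, u, hu, heu⟩ := Submodule.mem_sup.mp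
      (show v ∈ E x ⊔ F x by rw [(hcompl x hx).sup_eq_top]; trivial)
    have he0 : e = 0 := by
      refine f.comp_eq_zero hK hlam hΛinv hEi hFi hcontr hdom hx he hu
        (M := Kh * ‖v‖) ?_
      intro t ht
      rw [heu]
      have h := hcontrh x hx v hv t ht
      rw [f.reverse_D] at h
      have h1 : Real.exp (-lamh * t) ≤ 1 :=
        Real.exp_le_one_iff.mpr (by nlinarith)
      calc ‖f.D (-t) x v‖ ≤ Kh * Real.exp (-lamh * t) * ‖v‖ := h
        _ ≤ Kh * ‖v‖ := by
            nlinarith [mul_le_mul_of_nonneg_left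
              (mul_le_mul_of_nonneg_right h1 (norm_nonneg v)) hKh.le]
    rw [← heu, he0, zero_add]
    exact hu
  -- inclusion of the stable bundle in the backward central bundle
  have hEFh : ∀ x ∈ Λ, E x ≤ Fh x := by
    intro x hx v hv
    obtain ⟨e, he, u, hu, heu⟩ := Submodule.mem_sup.mp
      (show v ∈ Eh x ⊔ Fh x by rw [(hcomplh x hx).sup_eq_top]; trivial)
    have he0 : e = 0 := by
      refine f.reverse.comp_eq_zero hKh hlamh hΛinv' hEhi hFhi hcontrh hdomh hx
        he hu (M := K * ‖v‖) ?_
      intro t ht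
      rw [heu, f.reverse_D, neg_neg]
      have h := hcontr x hx v hv t ht
      have h1 : Real.exp (-lam * t) ≤ 1 :=
        Real.exp_le_one_iff.mpr (by nlinarith)
      calc ‖f.D t x v‖ ≤ K * Real.exp (-lam * t) * ‖v‖ := h
        _ ≤ K * ‖v‖ := by
            nlinarith [mul_le_mul_of_nonneg_left
              (mul_le_mul_of_nonneg_right h1 (norm_nonneg v)) hK.le]
    rw [← heu, he0, zero_add]
    exact hu
  -- the intersection of the two central bundles is the flow direction
  have hFFh : ∀ x ∈ Λ, f.X x ≠ 0 →
      F x ⊓ Fh x = Submodule.span ℝ {f.X x} := by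
    intro x hx hX0
    refine le_antisymm ?_ ?_
    · intro v hv
      rw [Submodule.mem_inf] at hv
      obtain ⟨hvF, hvFh⟩ := hv
      by_contra hvs
      have ha : 0 < area2 v (f.X x) := by
        rcases (area2_nonneg v (f.X x)).lt_or_eq with h | h
        · exact h
        · exact absurd (mem_span_of_area2_eq_zero hX0 h.symm) hvs
      have htend : Tendsto (fun t : ℝ => Real.exp ((lam + lamh) * t)) atTop atTop :=
        Real.tendsto_exp_atTop.comp (tendsto_id.const_mul_atTop (by linarith))
      obtain ⟨t, htC, ht0⟩ :=
        ((htend.eventually_gt_atTop (K * Kh)).and (eventually_ge_atTop (0:ℝ))).exists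
      have hy : f.φ t x ∈ Λ := f.mem_of_inv hΛinv hx t
      have hwFh : f.D t x v ∈ Fh (f.φ t x) := by
        rw [← hFhinv x hx t]
        exact Submodule.mem_map_of_mem hvFh
      have h1 := hsec x hx v hvF (f.X x) (hXF x hx) t ht0
      rw [f.X_phi] at h1
      have h2 := hsech (f.φ t x) hy (f.D t x v) hwFh (f.X (f.φ t x))
        (hXFh _ hy) t ht0
      rw [f.reverse_D, f.D_neg_D, f.X_phi, f.phi_neg_phi] at h2
      -- combine the two expansion estimates
      have hKh0 : (0:ℝ) ≤ Kh⁻¹ * Real.exp (lamh * t) := by positivity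
      have h3 := le_trans (mul_le_mul_of_nonneg_left h1 hKh0) h2
      have h3' : Real.exp ((lam + lamh) * t) / (K * Kh) * area2 v (f.X x)
          ≤ area2 v (f.X x) := by
        calc Real.exp ((lam + lamh) * t) / (K * Kh) * area2 v (f.X x)
            = Kh⁻¹ * Real.exp (lamh * t) *
              (K⁻¹ * Real.exp (lam * t) * area2 v (f.X x)) := by
              rw [show (lam + lamh) * t = lam * t + lamh * t by ring, Real.exp_add]
              field_simp
          _ ≤ area2 v (f.X x) := h3
      have h5 : 1 < Real.exp ((lam + lamh) * t) / (K * Kh) :=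
        (one_lt_div (by positivity)).mpr htC
      nlinarith [mul_lt_mul_of_pos_right h5 ha]
    · rw [Submodule.span_le, Set.singleton_subset_iff]
      exact Submodule.mem_inf.mpr ⟨hXF x hx, hXFh x hx⟩
  -- assemble the almost hyperbolic structure
  refine ⟨hΛc, hΛinv, hsing, E, Eh, max K Kh, min lam lamh,
    lt_max_iff.mpr (Or.inl hK), lt_min hlam hlamh, hEc, hEhc, hEi, hEhinv,
    ?_, ?_, ?_⟩
  · -- contraction with uniform constants
    intro x hx v hv t ht
    refine le_trans (hcontr x hx v hv t ht) ?_
    have h1 : Real.exp (-lam * t) ≤ Real.exp (-(min lam lamh) * t) :=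
      Real.exp_le_exp.mpr (by nlinarith [min_le_left lam lamh])
    exact mul_le_mul_of_nonneg_right
      (mul_le_mul (le_max_left _ _) h1 (Real.exp_pos _).le
        (le_trans hK.le (le_max_left _ _))) (norm_nonneg v)
  · -- expansion with uniform constants
    intro x hx v hv t ht
    have h := hExp x hx v hv t ht
    rw [ge_iff_le] at h ⊢
    refine le_trans ?_ h
    have h1 : Real.exp ((min lam lamh) * t) ≤ Real.exp (lamh * t) :=
      Real.exp_le_exp.mpr (by nlinarith [min_le_right lam lamh])
    have h2 : (max K Kh)⁻¹ ≤ Kh⁻¹ := inv_anti₀ hKh (le_max_right _ _)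
    exact mul_le_mul_of_nonneg_right
      (mul_le_mul h2 h1 (Real.exp_pos _).le (by positivity)) (norm_nonneg v)
  · -- the triple splitting at regular points
    intro x hx hX0
    have hFx : F x = Submodule.span ℝ {f.X x} ⊔ Eh x := by
      have hmod := sup_inf_assoc_of_le (Fh x) (hEhF x hx)
      rw [(hcomplh x hx).sup_eq_top, top_inf_eq] at hmod
      rw [inf_comm (Fh x) (F x), hFFh x hx hX0,
        sup_comm (Eh x) (Submodule.span ℝ {f.X x})] at hmod
      exact hmod
    refine ⟨?_, ?_, ?_⟩
    · rw [← hFx]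
      exact (hcompl x hx).inf_eq_bot
    · have hle : Submodule.span ℝ {f.X x} ⊓ Eh x ≤ Fh x ⊓ Eh x := by
        apply inf_le_inf_right
        rw [Submodule.span_le, Set.singleton_subset_iff]
        exact hXFh x hx
      have hbot : Fh x ⊓ Eh x = ⊥ := by
        rw [inf_comm]
        exact (hcomplh x hx).inf_eq_bot
      exact le_bot_iff.mp (hle.trans_eq hbot)
    · rw [sup_assoc, ← hFx]
      exact (hcompl x hx).sup_eq_top

end CFlow
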